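/- Let A, B, C, C' be commutative rings with homomorphisms f♯ : C → B, α : C → C' such that α becomes an isomorphism after inverting π (α ⊗ K is an isomorphism, K = Frac(R), π a non-zerodivisor), and suppose the π-adic completion (f♯)^ : Ĉ → B̂ factors as θ̂ ∘ α̂ for some θ̂ : Ĉ' → B̂. If B is π-adically separated and B = B̂ ∩ (B ⊗ K) inside B̂ ⊗ K, then θ̂ ∘ ι_{C'} has image in B, i.e., f♯ factors through α by a homomorphism C' → B. -/

import Mathlib

/-- The `I`-adic completion of a commutative ring `B`, realized as the subring of
compatible families in `Π n, B ⧸ I ^ n`. -/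
def AdicCpl {B : Type*} [CommRing B] (I : Ideal B) : Subring (∀ n : ℕ, B ⧸ I ^ n) where
  carrier := {x | ∀ ⦃m n : ℕ⦄ (h : m ≤ n),
    Ideal.Quotient.factor (S := I ^ n) (T := I ^ m) (Ideal.pow_le_pow_right h) (x n) = x m}
  mul_mem' {x y} hx hy := by
    intro m n h
    rw [Pi.mul_apply, Pi.mul_apply, _root_.map_mul, hx h, hy h]
  one_mem' := by
    intro m n h
    rw [Pi.one_apply, Pi.one_apply, _root_.map_one]
  add_mem' {x y} hx hy := by
    intro m n h
    rw [Pi.add_apply, Pi.add_apply, _root_.map_add, hx h, hy h]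
  zero_mem' := by
    intro m n h
    rw [Pi.zero_apply, Pi.zero_apply, _root_.map_zero]
  neg_mem' {x} hx := by
    intro m n h
    rw [Pi.neg_apply, Pi.neg_apply, _root_.map_neg, hx h]

/-- The canonical ring homomorphism from `B` to its `I`-adic completion. -/
def toAdicCpl {B : Type*} [CommRing B] (I : Ideal B) : B →+* AdicCpl I where
  toFun b := ⟨fun n => Ideal.Quotient.mk (I ^ n) b, fun m n h => Ideal.Quotient.factor_mk _ b⟩
  map_one' := Subtype.ext (funext fun n => _root_.map_one _)
  map_mul' a b := Subtype.ext (funext fun n => _root_.map_mul _ a b)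
  map_zero' := Subtype.ext (funext fun n => _root_.map_zero _)
  map_add' a b := Subtype.ext (funext fun n => _root_.map_add _ a b)

/-- Functoriality of the adic completion along a ring homomorphism. -/
def adicCplMap {B C : Type*} [CommRing B] [CommRing C] (I : Ideal B) (φ : B →+* C) :
    AdicCpl I →+* AdicCpl (I.map φ) where
  toFun x := ⟨fun n => Ideal.quotientMap ((I.map φ) ^ n) φ
      (by rw [← Ideal.map_pow]; exact Ideal.le_comap_map) (x.1 n), by
    intro m n h
    obtain ⟨b, hb⟩ := Ideal.Quotient.mk_surjective (x.1 n)
    have h2 : (x.1 m) = Ideal.Quotient.mk (I ^ m) b := by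
      rw [← x.2 h, ← hb, Ideal.Quotient.factor_mk]
    show Ideal.Quotient.factor _ (Ideal.quotientMap _ φ _ (x.1 n))
      = Ideal.quotientMap _ φ _ (x.1 m)
    rw [← hb, h2, Ideal.quotientMap_mk, Ideal.Quotient.factor_mk, Ideal.quotientMap_mk]⟩
  map_one' := Subtype.ext (funext fun n => by
    show Ideal.quotientMap _ φ _ 1 = 1
    exact _root_.map_one _)
  map_mul' a b := Subtype.ext (funext fun n => by
    show Ideal.quotientMap _ φ _ (a.1 n * b.1 n) = _
    exact _root_.map_mul _ _ _)
  map_zero' := Subtype.ext (funext fun n => by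
    show Ideal.quotientMap _ φ _ 0 = 0
    exact _root_.map_zero _)
  map_add' a b := Subtype.ext (funext fun n => by
    show Ideal.quotientMap _ φ _ (a.1 n + b.1 n) = _
    exact _root_.map_add _ _ _)

/-- Functoriality of the adic completion, with a specified target ideal. -/
def adicCplMap' {B C : Type*} [CommRing B] [CommRing C] (I : Ideal B) (J : Ideal C)
    (φ : B →+* C) (h : I.map φ = J) : AdicCpl I →+* AdicCpl J :=
  h ▸ adicCplMap I φ

open TensorProduct

set_option maxHeartbeats 1000000
set_option synthInstance.maxHeartbeats 400000

theorem aux1 {R : Type*} [CommRing R] [IsDomain R] [IsDiscreteValuationRing R]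
    (π : R) (hπ : Irreducible π) {M : Type*} [AddCommGroup M] [Module R M]
    (x : M ⊗[R] FractionRing R) :
    ∃ (n : ℕ) (c : M), (c ⊗ₜ[R] (1 : FractionRing R)) = π ^ n • x := by
  induction x with
  | zero => exact ⟨0, 0, by simp⟩
  | tmul c k =>
    obtain ⟨⟨r, s⟩, hs⟩ := IsLocalization.surj (nonZeroDivisors R) k
    have hs0 : (s : R) ≠ 0 := nonZeroDivisors.ne_zero s.2
    obtain ⟨n, u, hu⟩ := IsDiscreteValuationRing.eq_unit_mul_pow_irreducible hs0 hπ
    refine ⟨n, ((↑u⁻¹ : R) * r) • c, ?_⟩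
    have h2 : algebraMap R (FractionRing R) ↑u⁻¹ * algebraMap R (FractionRing R) ↑u = 1 := by
      rw [← map_mul, u.inv_mul, map_one]
    have hk : π ^ n • k = algebraMap R (FractionRing R) ((↑u⁻¹ : R) * r) := by
      rw [Algebra.smul_def, map_mul]
      rw [hu] at hs
      simp only [map_mul] at hs
      linear_combination (algebraMap R (FractionRing R) (↑u⁻¹ : R)) * hs -
        (k * algebraMap R (FractionRing R) (π ^ n)) * h2
    calc ((↑u⁻¹ : R) * r) • c ⊗ₜ[R] (1 : FractionRing R)
        = c ⊗ₜ[R] (((↑u⁻¹ : R) * r) • (1 : FractionRing R)) := smul_tmul _ _ _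
      _ = c ⊗ₜ[R] (π ^ n • k) := by rw [hk, Algebra.smul_def, mul_one]
      _ = π ^ n • c ⊗ₜ[R] k := tmul_smul _ _ _
  | add x y hx hy =>
    obtain ⟨n₁, c₁, h₁⟩ := hx
    obtain ⟨n₂, c₂, h₂⟩ := hy
    refine ⟨n₁ + n₂, π ^ n₂ • c₁ + π ^ n₁ • c₂, ?_⟩
    rw [TensorProduct.add_tmul, smul_add, ← smul_tmul', ← smul_tmul', h₁, h₂,
      smul_smul, smul_smul, ← pow_add, ← pow_add, add_comm n₂ n₁]

theorem aux2 {R : Type*} [CommRing R] [IsDomain R] [IsDiscreteValuationRing R]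
    (π : R) (hπ : Irreducible π) {M : Type*} [AddCommGroup M] [Module R M]
    (d : M) (h : d ⊗ₜ[R] (1 : FractionRing R) = 0) :
    ∃ m : ℕ, π ^ m • d = 0 := by
  haveI : IsLocalizedModule (nonZeroDivisors R) (TensorProduct.mk R (FractionRing R) M 1) :=
    (isLocalizedModule_iff_isBaseChange (nonZeroDivisors R) (FractionRing R) _).mpr
      (TensorProduct.isBaseChange R M (FractionRing R))
  have h' : (TensorProduct.mk R (FractionRing R) M 1) d = 0 := by
    have := congrArg (TensorProduct.comm R M (FractionRing R)) h
    simpa using this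
  obtain ⟨s, hs⟩ := (IsLocalizedModule.eq_zero_iff (nonZeroDivisors R) _).mp h'
  have hs' : (s : R) • d = 0 := hs
  have hs0 : (s : R) ≠ 0 := nonZeroDivisors.ne_zero s.2
  obtain ⟨m, u, hu⟩ := IsDiscreteValuationRing.eq_unit_mul_pow_irreducible hs0 hπ
  have key : (↑u⁻¹ : R) * ↑s = π ^ m := by
    rw [hu, ← mul_assoc, ← Units.val_mul]; simp
  exact ⟨m, by rw [← key, mul_smul, hs', smul_zero]⟩

theorem adicCplMap'_toAdicCpl {B C : Type*} [CommRing B] [CommRing C] (I : Ideal B)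
    (J : Ideal C) (φ : B →+* C) (h : I.map φ = J) (b : B) :
    adicCplMap' I J φ h (toAdicCpl I b) = toAdicCpl J (φ b) := by
  subst h
  show adicCplMap I φ (toAdicCpl I b) = toAdicCpl (I.map φ) (φ b)
  exact Subtype.ext (funext fun n => Ideal.quotientMap_mk)

/-- Let `R` be a complete DVR with uniformizer `π` and fraction field
`K`, and let `B, C, C'` be `R`-algebras with `f♯ : C → B` and `α : C → C'` such that
`α ⊗ K` is an isomorphism.  Suppose the `π`-adic completion of `f♯` factors as
`θ̂ ∘ α̂` for some `θ̂ : Ĉ' → B̂`.  If `B` is `π`-adically separated and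
`B = B̂ ∩ (B ⊗ K)` (an element of `B ⊗ K` whose image lies in `B̂` lies in `B`), then
`θ̂ ∘ ι_{C'}` has image in `B`; i.e. `f♯` factors through `α` by a homomorphism
`C' → B`. -/
theorem completion_factorization_descends
    {R : Type*} [CommRing R] [IsDomain R] [IsDiscreteValuationRing R]
    (π : R) (hπ : Irreducible π) [IsAdicComplete (Ideal.span {π}) R]
    {B C C' : Type*} [CommRing B] [CommRing C] [CommRing C']
    [Algebra R B] [Algebra R C] [Algebra R C']
    (fs : C →ₐ[R] B) (α : C →ₐ[R] C')
    (hαK : Function.Bijective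
      (Algebra.TensorProduct.map α (AlgHom.id R (FractionRing R)) :
        C ⊗[R] FractionRing R →ₐ[R] C' ⊗[R] FractionRing R))
    (hmapα : (Ideal.span {algebraMap R C π}).map (α : C →+* C')
      = Ideal.span {algebraMap R C' π})
    (hmapf : (Ideal.span {algebraMap R C π}).map (fs : C →+* B)
      = Ideal.span {algebraMap R B π})
    (θhat : AdicCpl (Ideal.span {algebraMap R C' π}) →+*
      AdicCpl (Ideal.span {algebraMap R B π}))
    (hfactor : adicCplMap' _ _ (fs : C →+* B) hmapf
      = θhat.comp (adicCplMap' _ _ (α : C →+* C') hmapα))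
    (hsep : Function.Injective (toAdicCpl (Ideal.span {algebraMap R B π})))
    (hint : ∀ (bhat : AdicCpl (Ideal.span {algebraMap R B π})) (c : B) (n : ℕ),
      toAdicCpl _ c = (toAdicCpl _ (algebraMap R B π)) ^ n * bhat →
      ∃ b : B, toAdicCpl _ b = bhat ∧ (algebraMap R B π) ^ n * b = c) :
    ∃ θ : C' →+* B,
      (toAdicCpl (Ideal.span {algebraMap R B π})).comp θ
        = θhat.comp (toAdicCpl (Ideal.span {algebraMap R C' π})) ∧
      θ.comp (α : C →+* C') = (fs : C →+* B) := by
  classical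
  let K := FractionRing R
  let JB : Ideal B := Ideal.span {algebraMap R B π}
  let JC : Ideal C := Ideal.span {algebraMap R C π}
  let JC' : Ideal C' := Ideal.span {algebraMap R C' π}
  -- compatibility of completions with the ring maps
  have hcomm : ∀ c : C, θhat (toAdicCpl JC' (α c)) = toAdicCpl JB (fs c) := by
    intro c
    have h1 : (adicCplMap' JC JC' (α : C →+* C') hmapα) ((toAdicCpl JC) c)
        = toAdicCpl JC' (α c) := adicCplMap'_toAdicCpl JC JC' (α : C →+* C') hmapα c
    have h2 : (adicCplMap' JC JB (fs : C →+* B) hmapf) ((toAdicCpl JC) c)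
        = toAdicCpl JB (fs c) := adicCplMap'_toAdicCpl JC JB (fs : C →+* B) hmapf c
    rw [← h1, ← RingHom.comp_apply, ← hfactor, h2]
  have hπB : θhat (toAdicCpl JC' (algebraMap R C' π)) = toAdicCpl JB (algebraMap R B π) := by
    have := hcomm (algebraMap R C π)
    rwa [α.commutes, fs.commutes] at this
  -- step A: every element of C' is, up to a power of π, in the image of α
  have key : ∀ c' : C', ∃ (n : ℕ) (c : C), α c = π ^ n • c' := by
    intro c'
    obtain ⟨x, hx⟩ := hαK.2 (c' ⊗ₜ (1 : K))
    obtain ⟨n, c, hc⟩ := aux1 π hπ x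
    have hmap := congrArg (Algebra.TensorProduct.map α (AlgHom.id R K)) hc
    rw [map_smul, hx, Algebra.TensorProduct.map_tmul, AlgHom.coe_id, id_eq] at hmap
    have hd : (α c - π ^ n • c') ⊗ₜ[R] (1 : K) = 0 := by
      rw [TensorProduct.sub_tmul, ← smul_tmul', ← hmap, sub_self]
    obtain ⟨m, hm⟩ := aux2 π hπ _ hd
    refine ⟨n + m, π ^ m • c, ?_⟩
    rw [smul_sub, sub_eq_zero] at hm
    have hαs : α (π ^ m • c) = π ^ m • α c := map_smul α.toLinearMap _ _
    rw [hαs, hm, smul_smul, ← pow_add, add_comm m n]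
  -- step B: existence of the lift pointwise
  have hex : ∀ c' : C', ∃ b : B, toAdicCpl JB b = θhat (toAdicCpl JC' c') := by
    intro c'
    obtain ⟨n, c, hc⟩ := key c'
    have h1 : toAdicCpl JB (fs c)
        = (toAdicCpl JB (algebraMap R B π)) ^ n * θhat (toAdicCpl JC' c') := by
      rw [← hcomm c, hc, Algebra.smul_def, map_pow, _root_.map_mul, map_pow, _root_.map_mul,
        map_pow, hπB]
    obtain ⟨b, hb, -⟩ := hint (θhat (toAdicCpl JC' c')) (fs c) n h1
    exact ⟨b, hb⟩
  choose g hg using hex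
  have hone : g 1 = 1 := by
    apply hsep
    rw [hg, _root_.map_one, _root_.map_one, _root_.map_one]
  have hmul : ∀ x y : C', g (x * y) = g x * g y := by
    intro x y
    apply hsep
    rw [hg, _root_.map_mul, _root_.map_mul, _root_.map_mul, hg, hg]
  have hzero : g 0 = 0 := by
    apply hsep
    rw [hg, _root_.map_zero, _root_.map_zero, _root_.map_zero]
  have hadd : ∀ x y : C', g (x + y) = g x + g y := by
    intro x y
    apply hsep
    rw [hg, _root_.map_add, _root_.map_add, _root_.map_add, hg, hg]
  refine ⟨{ toFun := g, map_one' := hone, map_mul' := hmul, map_zero' := hzero,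
            map_add' := hadd }, ?_, ?_⟩
  · exact RingHom.ext fun c' => hg c'
  · refine RingHom.ext fun c => hsep ?_
    show toAdicCpl JB (g (α c)) = toAdicCpl JB (fs c)
    rw [hg, hcomm]
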